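/- Let Γ = (V, E, s, t, wt) be a finite weighted directed multigraph with weights in a commutative ring R and let k ≥ 1. Let D be the |V|(k−1) × |V|(k−1) diagonal matrix, with rows and columns indexed by pairs (v, t) with v ∈ V and 2 ≤ t ≤ k, whose diagonal entry at (v,t) is Σ_{e ∈ E, s(e)=v} wt(e). For each voltage assignment ν : E → S_k let 𝒜_ν be the matrix with the same index set defined by 𝒜_ν[(v,t),(w,r)] = Σ_{e : s(e)=v, t(e)=w, ν(e)(t)=r} wt(e) − Σ_{e : s(e)=v, t(e)=w, ν(e)(t)=1} wt(e). Then Σ_{ν : E → S_k} det(D − 𝒜_ν) = (k!)^{|E|} · det(D). Equivalently, for independent uniformly random voltages, the random matrix 𝒜 satisfies E[det(D − 𝒜)] = det(D). -/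

import Mathlib

open Finset Matrix Equiv

set_option linter.unusedSectionVars false
set_option maxHeartbeats 1000000

section Aux

variable {V E : Type} [Fintype V] [DecidableEq V] [Fintype E] [DecidableEq E]
  {R : Type} [CommRing R] {k : ℕ}

/-- The row vector φ_w(j). -/
def phiRow (w : V) (j : Fin (k+1)) : V × Fin k → R := fun q =>
  if q.1 = w then (if j = q.2.succ then (1:R) else 0) - (if j = 0 then 1 else 0) else 0

lemma sum_phiRow (w : V) (π : Equiv.Perm (Fin (k+1))) :
    ∑ b : Fin (k+1), phiRow (R := R) w (π b) = 0 := by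
  rw [Equiv.sum_comp π (fun j => phiRow (R := R) w j)]
  funext q
  rw [Finset.sum_apply]
  by_cases h : q.1 = w <;>
    simp [phiRow, h, Finset.sum_sub_distrib]

lemma heart (hR : ∀ n : ℕ, ((n : R) + 1) ≠ 0) [NoZeroDivisors R]
    (Y : (V × Fin k) → (V × Fin k) → R) (v w : V)
    (s : Finset (V × Fin k)) (hs : ∀ p ∈ s, p.1 = v) (hne : s.Nonempty) :
    ∑ π : Equiv.Perm (Fin (k+1)),
      Matrix.detRowAlternating (s.piecewise (fun p => phiRow (R := R) w (π p.2.succ)) Y) = 0 := by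
  classical
  obtain ⟨p₀, hp₀⟩ := hne
  set d := (Matrix.detRowAlternating : ((V × Fin k) → R) [⋀^(V × Fin k)]→ₗ[R] R) with hd
  set val : Equiv.Perm (Fin (k+1)) → R := fun π =>
    d (s.piecewise (fun p => phiRow (R := R) w (π p.2.succ)) Y) with hval
  set S := ∑ π : Equiv.Perm (Fin (k+1)), val π with hS
  set a₀ : Fin (k+1) := p₀.2.succ with ha₀
  set I : Finset (Fin (k+1)) := (s.erase p₀).image (fun p => p.2.succ) with hI
  set W : Fin (k+1) → Equiv.Perm (Fin (k+1)) → R := fun b π =>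
    d (Function.update (s.piecewise (fun p => phiRow (R := R) w (π p.2.succ)) Y) p₀
        (phiRow w (π b))) with hW
  have succ_inj : ∀ p ∈ s, ∀ p' ∈ s, p.2.succ = p'.2.succ → p = p' := by
    intro p hp p' hp' h
    exact Prod.ext ((hs p hp).trans (hs p' hp').symm) (Fin.succ_injective _ h)
  -- Step 1 : expand the p₀ row
  have step1 : ∀ π, val π = - ∑ b ∈ Finset.univ.erase a₀, W b π := by
    intro π
    have hrow : (s.piecewise (fun p => phiRow (R := R) w (π p.2.succ)) Y) p₀
        = phiRow w (π a₀) := Finset.piecewise_eq_of_mem _ _ _ hp₀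
    have hphi : phiRow (R := R) w (π a₀)
        = (-1 : R) • ∑ b ∈ Finset.univ.erase a₀, phiRow (R := R) w (π b) := by
      have h0 := sum_phiRow (R := R) w π
      rw [← Finset.add_sum_erase Finset.univ _ (Finset.mem_univ a₀)] at h0
      rw [neg_one_smul]
      exact eq_neg_of_add_eq_zero_left h0
    have h1 : val π = d (Function.update
        (s.piecewise (fun p => phiRow (R := R) w (π p.2.succ)) Y) p₀
        ((-1 : R) • ∑ b ∈ Finset.univ.erase a₀, phiRow (R := R) w (π b))) := by
      rw [hval]
      simp only []
      congr 1
      rw [← hphi, ← hrow, Function.update_eq_self]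
    rw [h1]
    rw [show d (Function.update
        (s.piecewise (fun p => phiRow (R := R) w (π p.2.succ)) Y) p₀
        ((-1 : R) • ∑ b ∈ Finset.univ.erase a₀, phiRow (R := R) w (π b)))
      = (-1 : R) • d (Function.update
        (s.piecewise (fun p => phiRow (R := R) w (π p.2.succ)) Y) p₀
        (∑ b ∈ Finset.univ.erase a₀, phiRow (R := R) w (π b))) from
      d.toMultilinearMap.map_update_smul _ _ _ _]
    rw [show d (Function.update
        (s.piecewise (fun p => phiRow (R := R) w (π p.2.succ)) Y) p₀
        (∑ b ∈ Finset.univ.erase a₀, phiRow (R := R) w (π b)))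
      = ∑ b ∈ Finset.univ.erase a₀, W b π from
      d.toMultilinearMap.map_update_sum _ _ _ _]
    rw [neg_one_smul]
  -- Step 2 : collision terms vanish
  have step2 : ∀ b ∈ I, ∀ π, W b π = 0 := by
    intro b hb π
    obtain ⟨p₁, hp₁, hps⟩ := Finset.mem_image.mp hb
    have hp₁s : p₁ ∈ s := Finset.mem_of_mem_erase hp₁
    have hne' : p₁ ≠ p₀ := Finset.ne_of_mem_erase hp₁
    set u := Function.update (s.piecewise (fun p => phiRow (R := R) w (π p.2.succ)) Y) p₀
      (phiRow w (π b)) with hu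
    have hval_eq : u p₀ = u p₁ := by
      rw [hu, Function.update_self, Function.update_of_ne hne',
        Finset.piecewise_eq_of_mem _ _ _ hp₁s, hps]
    exact AlternatingMap.map_eq_zero_of_eq d u hval_eq hne'.symm
  -- Step 3 : other terms are S after reindexing by a swap
  have step3 : ∀ b, b ∉ I → b ≠ a₀ → ∀ π, W b π = val (π * Equiv.swap a₀ b) := by
    intro b hbI hba π
    rw [hval, hW]
    simp only []
    congr 1
    funext p
    by_cases hp : p ∈ s
    · by_cases hpp : p = p₀
      · subst hpp
        rw [Function.update_self, Finset.piecewise_eq_of_mem _ _ _ hp]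
        simp [Equiv.Perm.mul_apply, ← ha₀, Equiv.swap_apply_left]
      · rw [Function.update_of_ne hpp, Finset.piecewise_eq_of_mem _ _ _ hp,
          Finset.piecewise_eq_of_mem _ _ _ hp]
        have h1 : p.2.succ ≠ a₀ := fun h => hpp (succ_inj p hp p₀ hp₀ h)
        have h2 : p.2.succ ≠ b := fun h =>
          hbI (Finset.mem_image.mpr ⟨p, Finset.mem_erase.mpr ⟨hpp, hp⟩, h⟩)
        simp [Equiv.Perm.mul_apply, Equiv.swap_apply_of_ne_of_ne h1 h2]
    · have hpp : p ≠ p₀ := fun h => hp (h ▸ hp₀)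
      rw [Function.update_of_ne hpp, Finset.piecewise_eq_of_notMem _ _ _ hp,
        Finset.piecewise_eq_of_notMem _ _ _ hp]
  have hsum3 : ∀ b, b ∉ I → b ≠ a₀ → ∑ π : Equiv.Perm (Fin (k+1)), W b π = S := by
    intro b hbI hba
    rw [Finset.sum_congr rfl fun π _ => step3 b hbI hba π]
    rw [hS]
    exact Equiv.sum_comp (Equiv.mulRight (Equiv.swap a₀ b)) val
  -- Assemble
  have main : S = - ∑ b ∈ Finset.univ.erase a₀, ∑ π : Equiv.Perm (Fin (k+1)), W b π := by
    rw [hS, Finset.sum_congr rfl fun π _ => step1 π, Finset.sum_neg_distrib,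
      Finset.sum_comm]
  have main2 : S = -((((Finset.univ.erase a₀).filter (fun b => b ∉ I)).card : ℕ) • S) := by
    conv_lhs => rw [main]
    congr 1
    rw [show ∑ b ∈ Finset.univ.erase a₀, ∑ π : Equiv.Perm (Fin (k+1)), W b π
        = ∑ b ∈ Finset.univ.erase a₀, (if b ∈ I then 0 else S) from
      Finset.sum_congr rfl fun b hb => by
        by_cases hbi : b ∈ I
        · rw [if_pos hbi]
          exact Finset.sum_eq_zero fun π _ => step2 b hbi π
        · rw [if_neg hbi]
          exact hsum3 b hbi (Finset.ne_of_mem_erase hb)]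
    rw [Finset.sum_ite, Finset.sum_const, Finset.sum_const, smul_zero, zero_add]
  -- conclude S = 0
  set m := ((Finset.univ.erase a₀).filter (fun b => b ∉ I)).card with hm
  have : ((m : R) + 1) * S = 0 := by
    have := main2
    rw [nsmul_eq_mul] at this
    linear_combination this
  rcases mul_eq_zero.mp this with h | h
  · exact absurd h (hR m)
  · exact h

/-- the voltage adjacency contribution of a single edge from `v` to `w` -/
def bmat (v w : V) (π : Equiv.Perm (Fin (k+1))) : Matrix (V × Fin k) (V × Fin k) R :=
  Matrix.of fun p q => if p.1 = v then phiRow w (π p.2.succ) q else 0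

lemma key (hR : ∀ n : ℕ, ((n : R) + 1) ≠ 0) [NoZeroDivisors R]
    (Y : Matrix (V × Fin k) (V × Fin k) R) (c : R) (v w : V) :
    ∑ π : Equiv.Perm (Fin (k+1)), (Y - c • bmat v w π).det
      = ((k+1).factorial : R) * Y.det := by
  classical
  set d := (Matrix.detRowAlternating : ((V × Fin k) → R) [⋀^(V × Fin k)]→ₗ[R] R) with hd
  have expand : ∀ π : Equiv.Perm (Fin (k+1)), (Y - c • bmat (R := R) v w π).det
      = ∑ sf : Finset (V × Fin k),
          d (sf.piecewise (fun p => (-c) • (fun q => bmat (R := R) v w π p q)) Y) := by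
    intro π
    have hmat : (Y - c • bmat (R := R) v w π)
        = ((fun p => (-c) • (fun q => bmat (R := R) v w π p q)) + fun p => Y p) := by
      funext p q
      simp only [Matrix.sub_apply, Matrix.smul_apply, Pi.add_apply, Pi.smul_apply,
        smul_eq_mul]
      ring
    rw [show (Y - c • bmat (R := R) v w π).det
        = d (Y - c • bmat (R := R) v w π) from rfl, hmat]
    exact d.toMultilinearMap.map_add_univ _ _
  rw [Finset.sum_congr rfl fun π _ => expand π, Finset.sum_comm]
  rw [Finset.sum_eq_single (∅ : Finset (V × Fin k))]
  · refine Eq.trans (Finset.sum_congr rfl fun π _ => congrArg d (Finset.piecewise_empty _ _)) ?_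
    rw [Finset.sum_const, show d (fun p => Y p) = Y.det from rfl]
    rw [Finset.card_univ, Fintype.card_perm, Fintype.card_fin, nsmul_eq_mul]
  · intro sf _ hsf
    by_cases hgood : ∀ p ∈ sf, p.1 = v
    · -- rewrite each term into the heart form and pull out scalars
      have hterm : ∀ π : Equiv.Perm (Fin (k+1)),
          d (sf.piecewise (fun p => (-c) • (fun q => bmat (R := R) v w π p q)) Y)
          = (-c) ^ sf.card •
            d (sf.piecewise (fun p => phiRow (R := R) w (π p.2.succ)) Y) := by
        intro π
        set m := sf.piecewise (fun p => phiRow (R := R) w (π p.2.succ)) Y with hm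
        have h1 : sf.piecewise (fun p => (-c) • (fun q => bmat (R := R) v w π p q)) Y
            = sf.piecewise (fun p => (-c) • m p) m := by
          funext p
          by_cases hp : p ∈ sf
          · refine (Finset.piecewise_eq_of_mem _ _ _ hp).trans ?_
            rw [Finset.piecewise_eq_of_mem _ _ _ hp,
              hm]
            congr 1
            refine Eq.trans ?_ (Finset.piecewise_eq_of_mem sf
              (fun p => phiRow (R := R) w (π p.2.succ)) Y hp).symm
            funext q
            simp [bmat, hgood p hp, phiRow]
          · refine (Finset.piecewise_eq_of_notMem _ _ _ hp).trans ?_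
            rw [
              Finset.piecewise_eq_of_notMem _ _ _ hp, hm]
            exact (Finset.piecewise_eq_of_notMem _ _ _ hp).symm
        rw [h1, show d (sf.piecewise (fun p => (-c) • m p) m)
            = (∏ _p ∈ sf, (-c)) • d m from
          d.toMultilinearMap.map_piecewise_smul (fun _ => (-c)) m sf,
          Finset.prod_const]
      rw [Finset.sum_congr rfl fun π _ => hterm π, ← Finset.smul_sum,
        heart hR Y v w sf hgood (Finset.nonempty_iff_ne_empty.mpr hsf), smul_zero]
    · push_neg at hgood
      obtain ⟨p, hp, hpv⟩ := hgood
      refine Finset.sum_eq_zero fun π _ => ?_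
      refine d.toMultilinearMap.map_coord_zero p ?_
      refine (Finset.piecewise_eq_of_mem _ _ _ hp).trans ?_
      funext q
      simp [bmat, hpv]
  · intro h
    exact absurd (Finset.mem_univ _) h

lemma induct (hR : ∀ n : ℕ, ((n : R) + 1) ≠ 0) [NoZeroDivisors R]
    (s t : E → V) (wt : E → R) (F : Finset E) :
    ∀ Z : Matrix (V × Fin k) (V × Fin k) R,
    ∑ ν : E → Equiv.Perm (Fin (k+1)),
      (Z + Matrix.diagonal (fun p : V × Fin k => ∑ e ∈ F.filter (fun e => s e = p.1), wt e)
         - ∑ e ∈ F, wt e • bmat (s e) (t e) (ν e)).det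
    = (((k+1).factorial ^ (Fintype.card E) : ℕ) : R) *
      (Z + Matrix.diagonal (fun p : V × Fin k =>
        ∑ e ∈ F.filter (fun e => s e = p.1), wt e)).det := by
  classical
  induction F using Finset.induction_on with
  | empty =>
      intro Z
      simp only [Finset.filter_empty, Finset.sum_empty, Matrix.diagonal_zero, add_zero,
        sub_zero]
      rw [Finset.sum_const, Finset.card_univ, Fintype.card_fun, Fintype.card_perm,
        Fintype.card_fin, nsmul_eq_mul]
  | @insert e F he ih =>
      intro Z
      -- split off the diagonal contribution of e
      have hD : Matrix.diagonal (fun p : V × Fin k =>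
            ∑ e' ∈ (insert e F).filter (fun e' => s e' = p.1), wt e')
          = Matrix.diagonal (fun p : V × Fin k => if s e = p.1 then wt e else 0)
            + Matrix.diagonal (fun p : V × Fin k =>
              ∑ e' ∈ F.filter (fun e' => s e' = p.1), wt e') := by
        rw [Matrix.diagonal_add]
        refine congrArg Matrix.diagonal (funext fun p => ?_)
        rw [Finset.filter_insert]
        by_cases h : s e = p.1
        · rw [if_pos h, if_pos h,
            Finset.sum_insert (fun hc => he (Finset.mem_of_mem_filter e hc))]
        · rw [if_neg h, if_neg h, zero_add]
      set De : Matrix (V × Fin k) (V × Fin k) R :=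
        Matrix.diagonal (fun p : V × Fin k => if s e = p.1 then wt e else 0) with hDe
      set DF : Matrix (V × Fin k) (V × Fin k) R :=
        Matrix.diagonal (fun p : V × Fin k =>
          ∑ e' ∈ F.filter (fun e' => s e' = p.1), wt e') with hDF
      set AF : (E → Equiv.Perm (Fin (k+1))) → Matrix (V × Fin k) (V × Fin k) R :=
        fun ν => ∑ e' ∈ F, wt e' • bmat (s e') (t e') (ν e') with hAF
      have hM : ∀ ν : E → Equiv.Perm (Fin (k+1)),
          Z + Matrix.diagonal (fun p : V × Fin k =>
            ∑ e' ∈ (insert e F).filter (fun e' => s e' = p.1), wt e')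
            - ∑ e' ∈ insert e F, wt e' • bmat (s e') (t e') (ν e')
          = (Z + De + DF - AF ν) - wt e • bmat (s e) (t e) (ν e) := by
        intro ν
        rw [hD, Finset.sum_insert he]
        abel
      -- the splitting equivalence
      set eqv := Equiv.funSplitAt e (Equiv.Perm (Fin (k+1))) with heqv
      have hev : ∀ (x : Equiv.Perm (Fin (k+1))) (ρ : {e' // e' ≠ e} → Equiv.Perm (Fin (k+1))),
          (eqv.symm (x, ρ)) e = x := by
        intro x ρ
        rw [heqv, Equiv.funSplitAt_symm_apply, dif_pos rfl]
      have hAFeq : ∀ (x : Equiv.Perm (Fin (k+1))) (ρ : {e' // e' ≠ e} → Equiv.Perm (Fin (k+1))),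
          AF (eqv.symm (x, ρ)) = AF (eqv.symm (1, ρ)) := by
        intro x ρ
        refine Finset.sum_congr rfl fun e' he' => ?_
        have hne : e' ≠ e := fun h => he (h ▸ he')
        rw [heqv, Equiv.funSplitAt_symm_apply, Equiv.funSplitAt_symm_apply,
          dif_neg hne, dif_neg hne]
      -- transport sums through eqv
      have split : ∀ g : (E → Equiv.Perm (Fin (k+1))) → R,
          ∑ ν : E → Equiv.Perm (Fin (k+1)), g ν
            = ∑ x : Equiv.Perm (Fin (k+1)),
              ∑ ρ : {e' // e' ≠ e} → Equiv.Perm (Fin (k+1)), g (eqv.symm (x, ρ)) := by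
        intro g
        rw [← Equiv.sum_comp eqv.symm g, Fintype.sum_prod_type]
      simp only [hM]
      rw [split]
      rw [Finset.sum_comm]
      simp only [hev, hAFeq]
      have hkey : ∀ ρ : {e' // e' ≠ e} → Equiv.Perm (Fin (k+1)),
          ∑ x : Equiv.Perm (Fin (k+1)),
            (Z + De + DF - AF (eqv.symm (1, ρ)) - wt e • bmat (s e) (t e) x).det
          = ((k+1).factorial : R) * (Z + De + DF - AF (eqv.symm (1, ρ))).det :=
        fun ρ => key hR (Z + De + DF - AF (eqv.symm (1, ρ))) (wt e) (s e) (t e)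
      refine Eq.trans (Finset.sum_congr rfl fun ρ _ => hkey ρ) ?_
      rw [← Finset.mul_sum]
      have e1 := split (fun ν => (Z + De + DF - AF ν).det)
      have e2 : (∑ x : Equiv.Perm (Fin (k+1)), ∑ ρ : {e' // e' ≠ e} → Equiv.Perm (Fin (k+1)),
            (Z + De + DF - AF (eqv.symm (x, ρ))).det)
          = ∑ _x : Equiv.Perm (Fin (k+1)), ∑ ρ : {e' // e' ≠ e} → Equiv.Perm (Fin (k+1)),
            (Z + De + DF - AF (eqv.symm (1, ρ))).det :=
        Finset.sum_congr rfl fun x _ => Finset.sum_congr rfl fun ρ _ => by rw [hAFeq x ρ]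
      have e3 : (∑ _x : Equiv.Perm (Fin (k+1)), ∑ ρ : {e' // e' ≠ e} → Equiv.Perm (Fin (k+1)),
            (Z + De + DF - AF (eqv.symm (1, ρ))).det)
          = (k+1).factorial • ∑ ρ : {e' // e' ≠ e} → Equiv.Perm (Fin (k+1)),
            (Z + De + DF - AF (eqv.symm (1, ρ))).det := by
        rw [Finset.sum_const, Finset.card_univ, Fintype.card_perm, Fintype.card_fin]
      have e4 : ((k+1).factorial : R) * (∑ ρ : {e' // e' ≠ e} → Equiv.Perm (Fin (k+1)),
            (Z + De + DF - AF (eqv.symm (1, ρ))).det)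
          = ∑ ν : E → Equiv.Perm (Fin (k+1)), (Z + De + DF - AF ν).det := by
        rw [e1, e2, e3, nsmul_eq_mul]
      rw [e4]
      have hIH := ih (Z + De)
      refine Eq.trans hIH ?_
      rw [hD]
      congr 2
      abel

theorem aux (hR : ∀ n : ℕ, ((n : R) + 1) ≠ 0) [NoZeroDivisors R]
    (s t : E → V) (wt : E → R) (k : ℕ) :
    ∑ ν : E → Equiv.Perm (Fin (k + 1)),
      Matrix.det
        ((Matrix.diagonal fun p : V × Fin k =>
            ∑ e ∈ Finset.univ.filter fun e => s e = p.1, wt e)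
         - Matrix.of fun p q : V × Fin k =>
             (∑ e ∈ Finset.univ.filter
                 fun e => s e = p.1 ∧ t e = q.1 ∧ ν e p.2.succ = q.2.succ, wt e)
           - ∑ e ∈ Finset.univ.filter
                 fun e => s e = p.1 ∧ t e = q.1 ∧ ν e p.2.succ = 0, wt e)
    = ((Nat.factorial (k + 1)) ^ (Fintype.card E) : ℕ) *
      Matrix.det (Matrix.diagonal fun p : V × Fin k =>
        ∑ e ∈ Finset.univ.filter fun e => s e = p.1, wt e) := by
  classical
  have hA : ∀ ν : E → Equiv.Perm (Fin (k+1)),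
      (Matrix.of fun p q : V × Fin k =>
             (∑ e ∈ Finset.univ.filter
                 fun e => s e = p.1 ∧ t e = q.1 ∧ ν e p.2.succ = q.2.succ, wt e)
           - ∑ e ∈ Finset.univ.filter
                 fun e => s e = p.1 ∧ t e = q.1 ∧ ν e p.2.succ = 0, wt e)
      = ∑ e ∈ (Finset.univ : Finset E), wt e • bmat (s e) (t e) (ν e) := by
    intro ν
    ext p q
    rw [Matrix.of_apply, Matrix.sum_apply]
    rw [Finset.sum_filter, Finset.sum_filter, ← Finset.sum_sub_distrib]
    refine Finset.sum_congr rfl fun e _ => ?_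
    rw [Matrix.smul_apply, bmat, Matrix.of_apply]
    unfold phiRow
    by_cases h1 : s e = p.1
    · by_cases h2 : t e = q.1
      · simp only [h1, h2, true_and, eq_comm (a := p.1), eq_comm (a := q.1), if_pos rfl,
          smul_eq_mul]
        by_cases h3 : ν e p.2.succ = q.2.succ <;> by_cases h4 : ν e p.2.succ = 0 <;>
          simp [h3, h4] <;> split_ifs <;> ring
      · have h2' : ¬ q.1 = t e := fun h => h2 h.symm
        simp [h1, h2, h2', smul_eq_mul]
    · have h1' : ¬ p.1 = s e := fun h => h1 h.symm
      simp [h1, h1', smul_eq_mul]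
  have H := induct (k := k) hR s t wt Finset.univ 0
  simp only [zero_add] at H
  calc ∑ ν : E → Equiv.Perm (Fin (k + 1)), Matrix.det _
      = ∑ ν : E → Equiv.Perm (Fin (k+1)),
        (Matrix.diagonal (fun p : V × Fin k =>
            ∑ e ∈ Finset.univ.filter fun e => s e = p.1, wt e)
          - ∑ e ∈ (Finset.univ : Finset E), wt e • bmat (s e) (t e) (ν e)).det :=
        Finset.sum_congr rfl fun ν _ => by rw [hA ν]
    _ = _ := H


end Aux

theorem expected_det_voltage_laplacian
    {V E R : Type} [Fintype V] [DecidableEq V] [Fintype E] [DecidableEq E] [CommRing R]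
    (s t : E → V) (wt : E → R) (k : ℕ) :
    ∑ ν : E → Equiv.Perm (Fin (k + 1)),
      Matrix.det
        ((Matrix.diagonal fun p : V × Fin k =>
            ∑ e ∈ Finset.univ.filter fun e => s e = p.1, wt e)
         - Matrix.of fun p q : V × Fin k =>
             (∑ e ∈ Finset.univ.filter
                 fun e => s e = p.1 ∧ t e = q.1 ∧ ν e p.2.succ = q.2.succ, wt e)
           - ∑ e ∈ Finset.univ.filter
                 fun e => s e = p.1 ∧ t e = q.1 ∧ ν e p.2.succ = 0, wt e)
    = ((Nat.factorial (k + 1)) ^ (Fintype.card E) : ℕ) *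
      Matrix.det (Matrix.diagonal fun p : V × Fin k =>
        ∑ e ∈ Finset.univ.filter fun e => s e = p.1, wt e) := by
  classical
  set R₀ := MvPolynomial E ℤ with hR₀
  have hR : ∀ n : ℕ, ((n : R₀) + 1) ≠ 0 := by
    intro n h
    have h2 := congrArg (MvPolynomial.eval (fun _ : E => (0 : ℤ))) h
    simp only [map_add, map_natCast, _root_.map_one, map_zero] at h2
    omega
  have H := aux (V := V) (E := E) hR s t (fun e => MvPolynomial.X e) k
  set f : R₀ →+* R := (MvPolynomial.eval₂Hom (Int.castRingHom R) wt : R₀ →+* R) with hf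
  have hfX : ∀ e : E, f (MvPolynomial.X e) = wt e := fun e => MvPolynomial.eval₂Hom_X' _ _ _
  have key := congrArg f H
  rw [map_sum] at key
  rw [_root_.map_mul, map_natCast, RingHom.map_det] at key
  have hDmap : f.mapMatrix (Matrix.diagonal fun p : V × Fin k =>
        ∑ e ∈ Finset.univ.filter fun e => s e = p.1, (MvPolynomial.X e : R₀))
      = Matrix.diagonal fun p : V × Fin k =>
        ∑ e ∈ Finset.univ.filter fun e => s e = p.1, wt e := by
    ext p q
    simp only [RingHom.mapMatrix_apply, Matrix.map_apply, Matrix.diagonal_apply]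
    rw [apply_ite f, map_zero, map_sum]
    simp only [hfX]
  rw [hDmap] at key
  rw [← key]
  refine Finset.sum_congr rfl fun ν _ => ?_
  rw [RingHom.map_det]
  congr 1
  ext p q
  simp only [RingHom.mapMatrix_apply, Matrix.map_apply, Matrix.sub_apply,
    Matrix.diagonal_apply, Matrix.of_apply, map_sub]
  rw [apply_ite f, map_zero, map_sum, map_sum, map_sum]
  simp only [hfX]
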